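/- Let A ⊆ B be an extension of integral domains and let K be the quotient field of A. Then the trivial extension A ⋉ B is a Prüfer ring if and only if A is a Prüfer domain and K ⊆ B (equivalently, every nonzero element of A is invertible in B). -/

import Mathlib

open Pointwise

/-- A commutative ring is a Prüfer ring if every nonzero finitely generated regular ideal
is projective (equivalently, invertible). -/
def IsPruferRing (A : Type*) [CommRing A] : Prop :=
  ∀ I : Ideal A, I ≠ ⊥ → I.FG → (∃ r ∈ I, r ∈ nonZeroDivisors A) → Module.Projective A I

section Aux
open TrivSqZeroExt MulOpposite
variable {A B : Type*} [CommRing A] [CommRing B] [Algebra A B]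
    [Module Aᵐᵒᵖ B] [IsCentralScalar A B]

lemma aux_snd_mul (x y : TrivSqZeroExt A B) :
    (x * y).snd = x.fst • y.snd + y.fst • x.snd := by
  rw [TrivSqZeroExt.snd_mul, op_smul_eq_smul]

lemma aux_inr_mul (m : B) (z : TrivSqZeroExt A B) :
    inr m * z = inr (z.fst • m) := by
  apply TrivSqZeroExt.ext
  · simp
  · rw [aux_snd_mul]; simp

lemma aux_coe_lc {R : Type*} [CommRing R] (I : Ideal R) {ι : Type*} (g : ι → I) (F : ι →₀ R)
    (s : Finset ι) (hs : F.support ⊆ s) :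
    ((Finsupp.linearCombination R g F : I) : R) = ∑ y ∈ s, F y * (g y : R) := by
  rw [Finsupp.linearCombination_apply, Finsupp.sum_of_support_subset F hs _
    (fun i _ => by simp)]
  push_cast
  rfl

variable [IsDomain A] [IsDomain B]

omit [IsDomain A] [IsDomain B] in
lemma aux_fst_ne_zero {z : TrivSqZeroExt A B} [Nontrivial B]
    (hz : z ∈ nonZeroDivisors (TrivSqZeroExt A B)) : z.fst ≠ 0 := by
  intro h
  have h1 : inr (1 : B) * z = 0 := by rw [aux_inr_mul, h, zero_smul, inr_zero]
  have := hz.2 _ h1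
  have : ((0 : TrivSqZeroExt A B)).snd = (1:B) := by rw [← this]; simp
  simp at this

lemma aux_regular (hinj : Function.Injective (algebraMap A B)) {a : A} (ha : a ≠ 0) :
    (inl a : TrivSqZeroExt A B) ∈ nonZeroDivisors (TrivSqZeroExt A B) := by
  rw [mem_nonZeroDivisors_iff_right]
  intro y hy
  have h1 : y.fst * a = 0 := congrArg TrivSqZeroExt.fst hy
  have hy1 : y.fst = 0 := by
    rcases mul_eq_zero.mp h1 with h | h
    · exact h
    · exact absurd h ha
  have h2 : y.fst • (0:B) + a • y.snd = 0 := by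
    have := congrArg TrivSqZeroExt.snd hy
    rwa [aux_snd_mul, snd_inl, fst_inl] at this
  rw [smul_zero, zero_add, Algebra.smul_def] at h2
  have ha' : algebraMap A B a ≠ 0 := fun h => ha (hinj (by simpa using h))
  have hy2 : y.snd = 0 := by
    rcases mul_eq_zero.mp h2 with h | h
    · exact absurd h ha'
    · exact h
  exact TrivSqZeroExt.ext hy1 hy2

lemma aux_inv (hinj : Function.Injective (algebraMap A B))
    (hP : IsPruferRing (TrivSqZeroExt A B)) {a : A} (ha : a ≠ 0) :
    ∃ b : B, algebraMap A B a * b = 1 := by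
  classical
  letI R := TrivSqZeroExt A B
  set J : Ideal (TrivSqZeroExt A B) := Ideal.span {inl a, inr 1} with hJ
  have hma : (inl a : R) ∈ J := Ideal.subset_span (by simp)
  have hm1 : (inr (1:B) : R) ∈ J := Ideal.subset_span (by simp)
  have hinla : (inl a : R) ≠ 0 := by
    intro h
    exact ha (by simpa using congrArg TrivSqZeroExt.fst h)
  have hJbot : J ≠ ⊥ := fun h => hinla (by rwa [h, Ideal.mem_bot] at hma)
  have hfg : J.FG := ⟨{(inl a : TrivSqZeroExt A B), (inr (1:B) : TrivSqZeroExt A B)}, by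
    rw [hJ]; simp⟩
  have hproj : Module.Projective R J := hP J hJbot hfg ⟨inl a, hma, aux_regular hinj ha⟩
  obtain ⟨s, hs⟩ := Module.projective_def.mp hproj
  set va : J := ⟨inl a, hma⟩
  set v1 : J := ⟨inr 1, hm1⟩
  -- key: the first component of `s v1 y` vanishes
  have hkey : ∀ y : J, (s v1 y).fst = 0 := by
    intro y
    have hcomm : (inl a : R) • v1 = (inr (1:B) : R) • va := by
      apply Subtype.ext
      show (inl a : R) * inr 1 = inr 1 * inl a
      exact mul_comm _ _
    have h1 : (inl a : R) • s v1 = (inr (1:B) : R) • s va := by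
      rw [← map_smul, ← map_smul, hcomm]
    have h2 := congrArg (fun F => ((F : J →₀ R) y).fst) h1
    simp only [Finsupp.smul_apply, smul_eq_mul, fst_mul, fst_inl, fst_inr,
      zero_mul] at h2
    rcases mul_eq_zero.mp h2 with h | h
    · exact absurd h ha
    · exact h
  -- everything in J has fst in (a)
  have hfstJ : ∀ z : R, z ∈ J → z.fst ∈ Ideal.span {a} := by
    intro z hz
    have : z.fst ∈ Ideal.map (fstHom A A B) J := Ideal.mem_map_of_mem _ hz
    rw [hJ, Ideal.map_span] at this
    refine Ideal.span_le.mpr ?_ this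
    rintro x ⟨w, hw, rfl⟩
    rcases hw with rfl | rfl
    · exact Ideal.subset_span (by simp)
    · show (fstHom A A B) (inr 1) ∈ _
      have : (fstHom A A B) (inr (1:B)) = 0 := rfl
      rw [this]
      exact Ideal.zero_mem _
  -- expand the dual-basis identity at v1
  have htot := hs v1
  have hcoe : (inr (1:B) : TrivSqZeroExt A B) = ∑ y ∈ (s v1).support, s v1 y * (y : TrivSqZeroExt A B) := by
    have h := aux_coe_lc J id (s v1) (s v1).support subset_rfl
    rw [htot] at h
    simpa using h
  have hsnd : (1 : B) = ∑ y ∈ (s v1).support, ((y:R).fst • (s v1 y).snd) := by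
    have := congrArg (sndHom A B) hcoe
    rw [map_sum] at this
    simp only [sndHom_apply, snd_inr] at this
    rw [this]
    refine Finset.sum_congr rfl fun y _ => ?_
    rw [aux_snd_mul, hkey y, zero_smul, zero_add]
  have hmem : (1 : B) ∈ Ideal.span {algebraMap A B a} := by
    rw [hsnd]
    refine Ideal.sum_mem _ fun y _ => ?_
    obtain ⟨t, ht⟩ := Ideal.mem_span_singleton'.mp (hfstJ _ y.2)
    rw [Algebra.smul_def, ← ht, map_mul]
    exact Ideal.mul_mem_right _ _ (Ideal.mul_mem_left _ _ (Ideal.subset_span rfl))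
  obtain ⟨c, hc⟩ := Ideal.mem_span_singleton'.mp hmem
  exact ⟨c, by rw [mul_comm]; exact hc⟩

lemma aux_prufer (hinj : Function.Injective (algebraMap A B))
    (hP : IsPruferRing (TrivSqZeroExt A B)) : IsPruferRing A := by
  intro I₀ hbot hfg _hreg
  classical
  obtain ⟨x₁, hx₁I, hx₁⟩ := Submodule.exists_mem_ne_zero_of_ne_bot hbot
  obtain ⟨u, hu⟩ := aux_inv hinj hP hx₁
  set I : Ideal (TrivSqZeroExt A B) := Ideal.comap (fstHom A A B) I₀ with hI
  have hIeq : Ideal.map (inlAlgHom A A B) I₀ = I := by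
    apply le_antisymm
    · rw [Ideal.map_le_iff_le_comap]
      intro x hx
      exact hx
    · intro z hz
      have h1 : (inl z.fst : TrivSqZeroExt A B) ∈ Ideal.map (inlAlgHom A A B) I₀ :=
        Ideal.mem_map_of_mem _ hz
      have h3 : (inl x₁ : TrivSqZeroExt A B) ∈ Ideal.map (inlAlgHom A A B) I₀ :=
        Ideal.mem_map_of_mem _ hx₁I
      have h5 : (inr (u * z.snd)) * (inl x₁ : TrivSqZeroExt A B) = inr z.snd := by
        rw [aux_inr_mul]
        congr 1
        rw [fst_inl, Algebra.smul_def, ← mul_assoc, hu, one_mul]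
      have h2 : (inr z.snd : TrivSqZeroExt A B) ∈ Ideal.map (inlAlgHom A A B) I₀ :=
        h5 ▸ Ideal.mul_mem_left _ (inr (u * z.snd)) h3
      have h6 := add_mem h1 h2
      rwa [TrivSqZeroExt.inl_fst_add_inr_snd_eq] at h6
  have hIfg : I.FG := hIeq ▸ hfg.map _
  have hx₁mem : (inl x₁ : TrivSqZeroExt A B) ∈ I := hx₁I
  have hIbot : I ≠ ⊥ := by
    intro h
    rw [h, Ideal.mem_bot] at hx₁mem
    exact hx₁ (by simpa using congrArg TrivSqZeroExt.fst hx₁mem)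
  have hproj : Module.Projective (TrivSqZeroExt A B) I :=
    hP I hIbot hIfg ⟨inl x₁, hx₁mem, aux_regular hinj hx₁⟩
  obtain ⟨s, hs⟩ := Module.projective_def.mp hproj
  let emb : I₀ → I := fun x => ⟨inl (x : A), x.2⟩
  have hembadd : ∀ x y : I₀, emb (x + y) = emb x + emb y := fun x y =>
    Subtype.ext (by
      show (inl ((x:A) + (y:A)) : TrivSqZeroExt A B) = inl (x:A) + inl (y:A)
      rw [inl_add])
  have hembsmul : ∀ (c : A) (x : I₀), emb (c • x) = (inl c : TrivSqZeroExt A B) • emb x :=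
    fun c x => Subtype.ext (by
      show (inl (c • (x:A)) : TrivSqZeroExt A B) = inl c * inl (x:A)
      rw [inl_mul_inl, smul_eq_mul])
  let σ : I₀ →ₗ[A] (I →₀ A) :=
    { toFun := fun x => Finsupp.mapRange TrivSqZeroExt.fst fst_zero (s (emb x))
      map_add' := fun x y => by
        rw [hembadd, map_add, Finsupp.mapRange_add fst_add]
      map_smul' := fun c x => by
        rw [hembsmul, map_smul]
        ext y
        simp only [Finsupp.mapRange_apply, Finsupp.smul_apply, smul_eq_mul, fst_mul,
          fst_inl, RingHom.id_apply] }
  let π : (I →₀ A) →ₗ[A] I₀ :=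
    Finsupp.linearCombination A (fun y : I => (⟨(y : TrivSqZeroExt A B).fst, y.2⟩ : I₀))
  refine Module.Projective.of_split σ π (LinearMap.ext fun x => Subtype.ext ?_)
  simp only [LinearMap.comp_apply, LinearMap.id_apply]
  have hσ : ∀ z : I₀, σ z = Finsupp.mapRange TrivSqZeroExt.fst fst_zero (s (emb z)) :=
    fun _ => rfl
  have hσapp : ∀ (z : I₀) (y : I), (σ z) y = ((s (emb z)) y).fst := fun _ _ => rfl
  have hsupp : (σ x).support ⊆ (s (emb x)).support := by
    rw [hσ]; exact Finsupp.support_mapRange (hf := fst_zero)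
  have h1 : ((π (σ x) : I₀) : A)
      = ∑ y ∈ (s (emb x)).support, (σ x) y * (y : TrivSqZeroExt A B).fst :=
    aux_coe_lc I₀ _ (σ x) _ hsupp
  have h2 : ((emb x : I) : TrivSqZeroExt A B)
      = ∑ y ∈ (s (emb x)).support, s (emb x) y * (y : TrivSqZeroExt A B) := by
    have h := aux_coe_lc I (fun y => y) (s (emb x)) (s (emb x)).support subset_rfl
    rw [show Finsupp.linearCombination (TrivSqZeroExt A B) (fun y : I => y)
        = Finsupp.linearCombination _ id from rfl, hs (emb x)] at h
    exact h
  show ((π (σ x) : I₀) : A) = (x : A)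
  rw [h1]
  have h3 : ∀ y ∈ (s (emb x)).support,
      (σ x) y * (y : TrivSqZeroExt A B).fst
        = TrivSqZeroExt.fst (s (emb x) y * (y : TrivSqZeroExt A B)) := fun y _ => by
    rw [hσapp]; exact (fst_mul _ _).symm
  rw [Finset.sum_congr rfl h3]
  have h4 := map_sum (fstHom A A B) (fun y : I => s (emb x) y * (y : TrivSqZeroExt A B))
    (s (emb x)).support
  simp only [fstHom_apply] at h4
  rw [← h4, ← h2]
  rfl

lemma aux_back (hinj : Function.Injective (algebraMap A B)) (hA : IsPruferRing A)
    (hK : ∀ a : A, a ≠ 0 → ∃ b : B, algebraMap A B a * b = 1) :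
    IsPruferRing (TrivSqZeroExt A B) := by
  intro J hJbot hJfg hJreg
  classical
  obtain ⟨z, hzJ, hzreg⟩ := hJreg
  have ha₀ : z.fst ≠ 0 := aux_fst_ne_zero hzreg
  obtain ⟨u, hu⟩ := hK z.fst ha₀
  have hinr : ∀ b : B, (inr b : TrivSqZeroExt A B) ∈ J := by
    intro b
    have h5 : inr (u * b) * z = (inr b : TrivSqZeroExt A B) := by
      rw [aux_inr_mul]
      congr 1
      rw [Algebra.smul_def, ← mul_assoc, hu, one_mul]
    exact h5 ▸ Ideal.mul_mem_left _ _ hzJ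
  set I₀ : Ideal A := Ideal.map (fstHom A A B) J with hI₀
  have ha₀I : z.fst ∈ I₀ := Ideal.mem_map_of_mem _ hzJ
  have hI₀bot : I₀ ≠ ⊥ := fun h => ha₀ (by rwa [h, Ideal.mem_bot] at ha₀I)
  have hproj : Module.Projective A I₀ :=
    hA I₀ hI₀bot (hJfg.map _) ⟨z.fst, ha₀I, mem_nonZeroDivisors_of_ne_zero ha₀⟩
  obtain ⟨σ, hσ⟩ := Module.projective_def.mp hproj
  have hinl : ∀ x : A, x ∈ I₀ → (inl x : TrivSqZeroExt A B) ∈ J := by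
    intro x hx
    have hsurj : Function.Surjective (fstHom A A B) := fun r => ⟨inl r, rfl⟩
    obtain ⟨v, hvJ, hvx⟩ := (Ideal.mem_map_iff_of_surjective _ hsurj).mp hx
    have hd : (inl x : TrivSqZeroExt A B) = v - inr v.snd := by
      apply TrivSqZeroExt.ext
      · simp [← hvx]
      · simp
    rw [hd]
    exact sub_mem hvJ (hinr _)
  let e : I₀ → J := fun y => ⟨inl (y : A), hinl _ y.2⟩
  let xa : I₀ := ⟨z.fst, ha₀I⟩
  let xv : J → I₀ := fun v => ⟨(v : TrivSqZeroExt A B).fst, Ideal.mem_map_of_mem _ v.2⟩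
  have hkey : ∀ (w w' : I₀) (y : I₀), (w : A) * (σ w') y = (w' : A) * (σ w) y := by
    intro w w' y
    have h1 : (w : A) • w' = (w' : A) • w := Subtype.ext (by
      show (w : A) • (w' : A) = (w' : A) • (w : A)
      rw [smul_eq_mul, smul_eq_mul, mul_comm])
    have h2 := congrArg (fun F => (F : I₀ →₀ A) y) (congrArg σ h1)
    simpa only [map_smul, Finsupp.smul_apply, smul_eq_mul] using h2
  -- the section J → (I₀ →₀ R)
  let ifun : J → (I₀ →₀ TrivSqZeroExt A B) := fun v =>
    Finsupp.onFinset ((σ (xv v)).support ∪ (σ xa).support)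
      (fun y => inl ((σ (xv v)) y) + inr ((σ xa) y • (u * (v : TrivSqZeroExt A B).snd)))
      (fun y hy => by
        rw [Finset.mem_union]
        by_contra hc
        push_neg at hc
        obtain ⟨h1, h2⟩ := hc
        rw [Finsupp.notMem_support_iff] at h1 h2
        exact hy (by rw [h1, h2, zero_smul, inl_zero, inr_zero, add_zero]))
  have hifun_fst : ∀ (v : J) (y : I₀), (ifun v y).fst = (σ (xv v)) y := fun v y => by
    simp [ifun]
  have hifun_snd : ∀ (v : J) (y : I₀),
      (ifun v y).snd = (σ xa) y • (u * (v : TrivSqZeroExt A B).snd) := fun v y => by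
    simp [ifun]
  have hxv_add : ∀ v w : J, xv (v + w) = xv v + xv w := fun v w => Subtype.ext rfl
  have hxv_smul : ∀ (c : TrivSqZeroExt A B) (v : J), xv (c • v) = c.fst • xv v :=
    fun c v => Subtype.ext rfl
  let i : J →ₗ[TrivSqZeroExt A B] (I₀ →₀ TrivSqZeroExt A B) :=
    { toFun := ifun
      map_add' := fun v w => by
        refine Finsupp.ext fun y => ?_
        rw [Finsupp.add_apply]
        apply TrivSqZeroExt.ext
        · rw [hifun_fst, TrivSqZeroExt.fst_add, hifun_fst, hifun_fst, hxv_add, map_add,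
            Finsupp.add_apply]
        · rw [hifun_snd, TrivSqZeroExt.snd_add, hifun_snd, hifun_snd]
          push_cast [TrivSqZeroExt.snd_add]
          rw [mul_add, smul_add]
      map_smul' := fun c v => by
        refine Finsupp.ext fun y => ?_
        rw [RingHom.id_apply, Finsupp.smul_apply, smul_eq_mul]
        apply TrivSqZeroExt.ext
        · rw [hifun_fst, TrivSqZeroExt.fst_mul, hifun_fst, hxv_smul, map_smul,
            Finsupp.smul_apply, smul_eq_mul]
        · rw [hifun_snd, aux_snd_mul, hifun_snd, hifun_fst]
          have hc : ((c • v : J) : TrivSqZeroExt A B).snd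
              = c.fst • (v : TrivSqZeroExt A B).snd + (v : TrivSqZeroExt A B).fst • c.snd := by
            show (c * (v : TrivSqZeroExt A B)).snd = _
            rw [aux_snd_mul]
          rw [hc, mul_add, smul_add]
          congr 1
          · rw [mul_smul_comm, smul_comm]
          · -- (σ xa) y • (u * ((↑v).fst • c.snd)) = (σ (xv v)) y • c.snd
            have e3 : (σ xa) y * ((xv v : I₀) : A) = (σ (xv v)) y * ((xa : I₀) : A) := by
              linear_combination (hkey (xv v) xa y)
            have e4 : ((xv v : I₀) : A) = (v : TrivSqZeroExt A B).fst := rfl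
            have e5 : ((xa : I₀) : A) = z.fst := rfl
            have e6 : z.fst • (u * c.snd) = c.snd := by
              rw [Algebra.smul_def, ← mul_assoc, hu, one_mul]
            rw [mul_smul_comm, smul_smul, ← e4, e3, e5, mul_smul, e6] }
  let π : (I₀ →₀ TrivSqZeroExt A B) →ₗ[TrivSqZeroExt A B] J :=
    Finsupp.linearCombination (TrivSqZeroExt A B) e
  refine Module.Projective.of_split i π (LinearMap.ext fun v => Subtype.ext ?_)
  simp only [LinearMap.comp_apply, LinearMap.id_apply]
  set U : Finset I₀ := (σ (xv v)).support ∪ (σ xa).support with hU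
  have hsub : (ifun v).support ⊆ U := Finsupp.support_onFinset_subset
  have h1 : ((π (i v) : J) : TrivSqZeroExt A B)
      = ∑ y ∈ U, ifun v y * inl (y : A) := aux_coe_lc J e (ifun v) U hsub
  have hfstsum : ∀ (w : I₀), (σ w).support ⊆ U → ∑ y ∈ U, (σ w) y * (y : A) = (w : A) := by
    intro w hw
    have h := aux_coe_lc I₀ (fun y => y) (σ w) U hw
    rw [show Finsupp.linearCombination A (fun y : I₀ => y) = Finsupp.linearCombination A id
      from rfl, hσ w] at h
    exact h.symm
  rw [h1]
  apply TrivSqZeroExt.ext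
  · have h2 := map_sum (fstHom A A B) (fun y : I₀ => ifun v y * inl (y : A)) U
    simp only [fstHom_apply] at h2
    rw [h2]
    have h3 : ∀ y ∈ U, (ifun v y * inl (y : A)).fst = (σ (xv v)) y * (y : A) := fun y _ => by
      rw [TrivSqZeroExt.fst_mul, hifun_fst, fst_inl]
    rw [Finset.sum_congr rfl h3, hfstsum (xv v) (Finset.subset_union_left)]
  · have h2 := map_sum (sndHom A B) (fun y : I₀ => ifun v y * inl (y : A)) U
    simp only [sndHom_apply] at h2
    rw [h2]
    have h3 : ∀ y ∈ U, (ifun v y * inl (y : A)).snd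
        = ((σ xa) y * (y : A)) • (u * (v : TrivSqZeroExt A B).snd) := fun y _ => by
      rw [aux_snd_mul, hifun_snd, hifun_fst, snd_inl, smul_zero, zero_add, fst_inl,
        smul_smul, mul_comm ((y:A))]
    rw [Finset.sum_congr rfl h3, ← Finset.sum_smul,
      hfstsum xa (Finset.subset_union_right),
      show ((xa : I₀) : A) = z.fst from rfl, Algebra.smul_def, ← mul_assoc, hu, one_mul]

end Aux

theorem stmt14 {A B : Type*} [CommRing A] [CommRing B] [IsDomain A] [IsDomain B]
    [Algebra A B] (hinj : Function.Injective (algebraMap A B))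
    [Module Aᵐᵒᵖ B] [IsCentralScalar A B] :
    IsPruferRing (TrivSqZeroExt A B) ↔
      (IsPruferRing A ∧ ∀ a : A, a ≠ 0 → ∃ b : B, algebraMap A B a * b = 1) := by
  constructor
  · intro hP
    exact ⟨aux_prufer hinj hP, fun a ha => aux_inv hinj hP ha⟩
  · rintro ⟨hA, hK⟩
    exact aux_back hinj hA hK
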